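/- Let G be a finite group, R a subgroup of G, and H an R-conjugate-permutable subgroup of G with R·H = H·R (as subsets of G). Then H is subnormal in H·R; moreover, if in addition H is a pronormal subgroup of H·R, then H is normal in H·R. -/

import Mathlib

open scoped Pointwise

section Defs

variable {G : Type*} [Group G]

/-- The conjugate `H^x = x⁻¹ H x` of a subgroup `H` of `G`. -/
def conjS (x : G) (H : Subgroup G) : Subgroup G :=
  H.map (MulAut.conj x⁻¹).toMonoidHom

/-- A subgroup `H` of `G` is `R`-conjugate-permutable (for a subset `R ⊆ G`) if
`H · H^x = H^x · H` as subsets of `G`, for all `x ∈ R`. -/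
def IsRCP (R : Set G) (H : Subgroup G) : Prop :=
  ∀ x ∈ R, (H : Set G) * (conjS x H : Set G) = (conjS x H : Set G) * (H : Set G)

/-- A subgroup `H` of `G` is conjugate-permutable if `H · H^x = H^x · H` for all `x ∈ G`. -/
def IsConjPermutable (H : Subgroup G) : Prop :=
  IsRCP (Set.univ : Set G) H

/-- `N` is a minimal normal subgroup of `G`. -/
def IsMinimalNormal (N : Subgroup G) : Prop :=
  N.Normal ∧ N ≠ ⊥ ∧ ∀ K : Subgroup G, K.Normal → K ≤ N → K = ⊥ ∨ K = N

/-- `H` is an abnormal subgroup of `G`: `x ∈ ⟨H, H^x⟩` for all `x ∈ G`. -/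
def IsAbnormal (H : Subgroup G) : Prop :=
  ∀ x : G, x ∈ H ⊔ conjS x H

/-- `H` is normal in the subgroup `K` of `G`. -/
def IsNormalIn (H K : Subgroup G) : Prop :=
  H ≤ K ∧ ∀ x ∈ K, ∀ h ∈ H, x * h * x⁻¹ ∈ H

/-- `H` is subnormal in the subgroup `K`: there is a chain
`H = H₀ ◁ H₁ ◁ ⋯ ◁ Hₙ = K` with each term normal in the next. -/
def IsSubnormalIn (H K : Subgroup G) : Prop :=
  ∃ (n : ℕ) (s : Fin (n + 1) → Subgroup G),
    s 0 = H ∧ s (Fin.last n) = K ∧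
    ∀ i : Fin n, s i.castSucc ≤ s i.succ ∧
      ∀ x ∈ s i.succ, ∀ h ∈ s i.castSucc, x * h * x⁻¹ ∈ s i.castSucc

/-- `H` is pronormal in the subgroup `K`: for every `x ∈ K`, the subgroups `H` and `H^x`
are conjugate in `⟨H, H^x⟩`. -/
def IsPronormalIn (H K : Subgroup G) : Prop :=
  H ≤ K ∧ ∀ x ∈ K, ∃ k ∈ H ⊔ conjS x H, conjS k H = conjS x H

end Defs

/-- The socle of `G`: the subgroup generated by all minimal normal subgroups of `G`. -/
def socle' (G : Type*) [Group G] : Subgroup G :=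
  sSup {N : Subgroup G | IsMinimalNormal N}

/-- `F̃(G)`: the subgroup of `G` containing the Frattini subgroup `Φ(G)` with
`F̃(G)/Φ(G) = Soc(G/Φ(G))`. -/
def Ftilde (G : Type*) [Group G] : Subgroup G :=
  (socle' (G ⧸ frattini G)).comap (QuotientGroup.mk' (frattini G))

/-- The Fitting subgroup `F(G)`: the largest normal nilpotent subgroup of `G`
(the subgroup generated by all normal nilpotent subgroups). -/
def Fitting (G : Type*) [Group G] : Subgroup G :=
  sSup {N : Subgroup G | N.Normal ∧ Group.IsNilpotent N}

section FittingNormal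

variable {G : Type*} [Group G]

lemma map_conj_eq_self {N : Subgroup G} (hN : N.Normal) (g : G) :
    N.map (MulAut.conj g).toMonoidHom = N := by
  ext x
  simp only [Subgroup.mem_map, MulEquiv.coe_toMonoidHom, MulAut.conj_apply]
  constructor
  · rintro ⟨n, hn, rfl⟩; exact hN.conj_mem n hn g
  · intro hx
    refine ⟨g⁻¹ * x * g, by simpa using hN.conj_mem x hx g⁻¹, by group⟩

instance Fitting_normal (G : Type*) [Group G] : (Fitting G).Normal := by
  constructor
  intro n hn g
  have h1 : (Fitting G).map (MulAut.conj g).toMonoidHom = Fitting G := by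
    unfold Fitting
    rw [sSup_eq_iSup, Subgroup.map_iSup]
    refine iSup_congr fun N => ?_
    rw [Subgroup.map_iSup]
    exact iSup_congr_Prop Iff.rfl fun hN => map_conj_eq_self hN.1 g
  rw [← h1]
  exact Subgroup.mem_map.2 ⟨n, hn, rfl⟩

end FittingNormal

/-- The generalized Fitting subgroup `F*(G)`: the subgroup containing `F(G)` with
`F*(G)/F(G) = Soc(C_G(F(G))·F(G)/F(G))`. -/
def FStar (G : Type*) [Group G] : Subgroup G :=
  Subgroup.comap (QuotientGroup.mk' (Fitting G))
    (Subgroup.map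
      ((Subgroup.centralizer (Fitting G : Set G) ⊔ Fitting G).map
          (QuotientGroup.mk' (Fitting G))).subtype
      (socle' ((Subgroup.centralizer (Fitting G : Set G) ⊔ Fitting G).map
          (QuotientGroup.mk' (Fitting G)))))

/-- A group is supersoluble if it has a normal series all of whose terms are
normal in the whole group and all of whose factors are cyclic; the factor
`s (i+1) / s i` being cyclic is expressed by `s (i+1) ≤ s i ⊔ ⟨g⟩` for some `g`. -/
def IsSupersoluble (G : Type*) [Group G] : Prop :=
  ∃ (n : ℕ) (s : Fin (n + 1) → Subgroup G),
    Monotone s ∧ s 0 = ⊥ ∧ s (Fin.last n) = ⊤ ∧ (∀ i, (s i).Normal) ∧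
    ∀ i : Fin n, ∃ g : G, s i.succ ≤ s i.castSucc ⊔ Subgroup.zpowers g

/-- A group is metanilpotent if it has a normal nilpotent subgroup with
nilpotent quotient. -/
def IsMetanilpotent (G : Type*) [Group G] : Prop :=
  ∃ (N : Subgroup G) (hN : N.Normal),
    Group.IsNilpotent N ∧
      @Group.IsNilpotent (G ⧸ N) (@QuotientGroup.Quotient.group G _ N hN)

section Helpers
variable {G : Type*} [Group G]
lemma mem_conjS' {x g : G} {H : Subgroup G} :
    g ∈ conjS x H ↔ ∃ h ∈ H, x⁻¹ * h * x = g := by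
  simp [conjS, Subgroup.mem_map, MulAut.conj_apply]
lemma conjS_one' (H : Subgroup G) : conjS 1 H = H := by
  ext g; simp [mem_conjS']
lemma conjS_conjS' (x y : G) (H : Subgroup G) :
    conjS x (conjS y H) = conjS (y * x) H := by
  ext g
  simp only [mem_conjS']
  constructor
  · rintro ⟨h, ⟨h', hh', rfl⟩, rfl⟩
    exact ⟨h', hh', by group⟩
  · rintro ⟨h, hh, rfl⟩
    exact ⟨y⁻¹ * h * y, ⟨h, hh, rfl⟩, by group⟩
lemma conjS_self_of_mem' {X : Subgroup G} {k : G} (hk : k ∈ X) : conjS k X = X := by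
  ext g
  rw [mem_conjS']
  constructor
  · rintro ⟨h, hh, rfl⟩
    exact mul_mem (mul_mem (inv_mem hk) hh) hk
  · intro hg
    exact ⟨k * g * k⁻¹, mul_mem (mul_mem hk hg) (inv_mem hk), by group⟩
lemma conjS_le_of_le' {H S : Subgroup G} (hHS : H ≤ S) {t : G} (ht : t ∈ S) :
    conjS t H ≤ S := by
  intro g hg
  obtain ⟨h, hh, rfl⟩ := mem_conjS'.1 hg
  exact mul_mem (mul_mem (inv_mem ht) (hHS hh)) ht
lemma conjS_mono' {H X : Subgroup G} (t : G) (h : H ≤ X) : conjS t H ≤ conjS t X :=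
  Subgroup.map_mono h
lemma conjS_coe' (x : G) (H : Subgroup G) :
    (conjS x H : Set G) = (⇑(MulAut.conj x⁻¹).toMonoidHom) '' (H : Set G) :=
  Subgroup.coe_map _ _
lemma image_conjS_coe' (x y : G) (H : Subgroup G) :
    (⇑(MulAut.conj x⁻¹).toMonoidHom) '' ((conjS y H : Subgroup G) : Set G)
      = ((conjS (y * x) H : Subgroup G) : Set G) := by
  rw [← conjS_coe', conjS_conjS']
end Helpers

section Prod
variable {G : Type*} [Group G]
def mulSub (A B : Subgroup G) (h : (A : Set G) * (B : Set G) = (B : Set G) * (A : Set G)) :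
    Subgroup G where
  carrier := (A : Set G) * (B : Set G)
  one_mem' := ⟨1, A.one_mem, 1, B.one_mem, one_mul 1⟩
  mul_mem' := by
    rintro x y ⟨a, ha, b, hb, rfl⟩ ⟨a', ha', b', hb', rfl⟩
    have hmem : b * a' ∈ (B : Set G) * (A : Set G) := ⟨b, hb, a', ha', rfl⟩
    rw [← h] at hmem
    obtain ⟨a₂, ha₂, b₂, hb₂, hba⟩ := hmem
    refine ⟨a * a₂, mul_mem ha ha₂, b₂ * b', mul_mem hb₂ hb', ?_⟩
    have hba' : a₂ * b₂ = b * a' := hba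
    calc a * a₂ * (b₂ * b') = a * (a₂ * b₂) * b' := by group
    _ = a * (b * a') * b' := by rw [hba']
    _ = a * b * (a' * b') := by group
  inv_mem' := by
    rintro x ⟨a, ha, b, hb, rfl⟩
    have hmem : b⁻¹ * a⁻¹ ∈ (B : Set G) * (A : Set G) := ⟨b⁻¹, inv_mem hb, a⁻¹, inv_mem ha, rfl⟩
    rw [← h] at hmem
    simpa [mul_inv_rev] using hmem
lemma mulSub_coe (A B : Subgroup G) (h) : ((mulSub A B h : Subgroup G) : Set G) = (A : Set G) * B := rfl
lemma subgroup_mul_self (X : Subgroup G) : (X : Set G) * (X : Set G) = (X : Set G) := by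
  apply Set.Subset.antisymm
  · rintro x ⟨a, ha, b, hb, rfl⟩
    exact mul_mem ha hb
  · intro x hx
    exact ⟨x, hx, 1, X.one_mem, mul_one x⟩
def cprod (H : Subgroup G) (l : List G) : Set G :=
  (l.map fun t => ((conjS t H : Subgroup G) : Set G)).prod
lemma cprod_nil (H : Subgroup G) : cprod H [] = 1 := rfl
lemma cprod_cons (H : Subgroup G) (t : G) (l : List G) :
    cprod H (t :: l) = ((conjS t H : Subgroup G) : Set G) * cprod H l := by
  simp [cprod]
lemma cprod_append (H : Subgroup G) (l₁ l₂ : List G) :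
    cprod H (l₁ ++ l₂) = cprod H l₁ * cprod H l₂ := by
  simp [cprod]
lemma cprod_conj (H : Subgroup G) (k : G) (l : List G) :
    (⇑(MulAut.conj k⁻¹).toMonoidHom) '' cprod H l = cprod H (l.map (· * k)) := by
  induction l with
  | nil => simp [cprod_nil]; rfl
  | cons t l ih =>
    rw [cprod_cons, Set.image_mul, ih, image_conjS_coe', List.map_cons, cprod_cons]
end Prod

section CP
variable {G : Type*} [Group G]

/-- pairwise permutability of conjugates from conjugate-permutability -/
lemma conjS_mul_comm {H S : Subgroup G}
    (hCP : ∀ x ∈ S, (H : Set G) * (conjS x H : Subgroup G) = ((conjS x H : Subgroup G) : Set G) * H)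
    {a b : G} (ha : a ∈ S) (hb : b ∈ S) :
    ((conjS a H : Subgroup G) : Set G) * (conjS b H : Subgroup G)
      = ((conjS b H : Subgroup G) : Set G) * (conjS a H : Subgroup G) := by
  have h := hCP (b * a⁻¹) (mul_mem hb (inv_mem ha))
  have h2 := congrArg (fun s => (⇑(MulAut.conj a⁻¹).toMonoidHom) '' s) h
  simp only [Set.image_mul] at h2
  rw [← conjS_coe' a H, image_conjS_coe' a (b * a⁻¹) H, inv_mul_cancel_right] at h2
  exact h2

lemma cprod_comm_single {H S : Subgroup G}
    (hCP : ∀ x ∈ S, (H : Set G) * (conjS x H : Subgroup G) = ((conjS x H : Subgroup G) : Set G) * H)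
    {a : G} (ha : a ∈ S) :
    ∀ (l : List G), (∀ t ∈ l, t ∈ S) →
      cprod H l * ((conjS a H : Subgroup G) : Set G)
        = ((conjS a H : Subgroup G) : Set G) * cprod H l := by
  intro l
  induction l with
  | nil => intro _; rw [cprod_nil, one_mul, mul_one]
  | cons t l ih =>
    intro hmem
    have ht : t ∈ S := hmem t List.mem_cons_self
    have hl : ∀ u ∈ l, u ∈ S := fun u hu => hmem u (List.mem_cons_of_mem t hu)
    rw [cprod_cons, mul_assoc, ih hl, ← mul_assoc, conjS_mul_comm hCP ht ha, mul_assoc]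

lemma cprod_comm {H S : Subgroup G}
    (hCP : ∀ x ∈ S, (H : Set G) * (conjS x H : Subgroup G) = ((conjS x H : Subgroup G) : Set G) * H)
    {l₁ l₂ : List G} (h₁ : ∀ t ∈ l₁, t ∈ S) (h₂ : ∀ t ∈ l₂, t ∈ S) :
    cprod H l₁ * cprod H l₂ = cprod H l₂ * cprod H l₁ := by
  induction l₁ with
  | nil => rw [cprod_nil, one_mul, mul_one]
  | cons t l ih =>
    have ht : t ∈ S := h₁ t List.mem_cons_self
    have hl : ∀ u ∈ l, u ∈ S := fun u hu => h₁ u (List.mem_cons_of_mem t hu)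
    rw [cprod_cons, mul_assoc, ih hl, ← mul_assoc, ← cprod_comm_single hCP ht l₂ h₂,
      mul_assoc, ← cprod_cons]

lemma cprod_subgroup {H S : Subgroup G}
    (hCP : ∀ x ∈ S, (H : Set G) * (conjS x H : Subgroup G) = ((conjS x H : Subgroup G) : Set G) * H) :
    ∀ (l : List G), l ≠ [] → (∀ t ∈ l, t ∈ S) → ∃ X : Subgroup G, (X : Set G) = cprod H l := by
  intro l
  induction l with
  | nil => intro h; exact absurd rfl h
  | cons a l ih =>
    intro _ hmem
    have ha : a ∈ S := hmem a List.mem_cons_self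
    have hl : ∀ u ∈ l, u ∈ S := fun u hu => hmem u (List.mem_cons_of_mem a hu)
    rcases eq_or_ne l [] with rfl | hlne
    · exact ⟨conjS a H, by rw [cprod_cons, cprod_nil, mul_one]⟩
    · obtain ⟨X, hX⟩ := ih hlne hl
      have comm : ((conjS a H : Subgroup G) : Set G) * (X : Set G)
          = (X : Set G) * ((conjS a H : Subgroup G) : Set G) := by
        rw [hX]
        exact (cprod_comm_single hCP ha l hl).symm
      exact ⟨mulSub (conjS a H) X comm, by rw [mulSub_coe, hX, cprod_cons]⟩

lemma cprod_subset {H S : Subgroup G} (hHS : H ≤ S) :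
    ∀ (l : List G), (∀ t ∈ l, t ∈ S) → cprod H l ⊆ (S : Set G) := by
  intro l
  induction l with
  | nil =>
    intro _
    rw [cprod_nil]
    intro x hx
    have : x = 1 := hx
    rw [this]; exact S.one_mem
  | cons a l ih =>
    intro hmem
    have ha : a ∈ S := hmem a List.mem_cons_self
    have hl : ∀ u ∈ l, u ∈ S := fun u hu => hmem u (List.mem_cons_of_mem a hu)
    rw [cprod_cons]
    rintro x ⟨u, hu, v, hv, rfl⟩
    exact mul_mem (conjS_le_of_le' hHS ha hu) (ih hl hv)

end CP

section Key
variable {G : Type*} [Group G]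

/-- definition of the normal closure of H inside T (as subgroup of G) -/
def clS (H T : Subgroup G) : Subgroup G := ⨆ t ∈ (T : Set G), conjS t H

lemma le_clS (H T : Subgroup G) : H ≤ clS H T := by
  have h1 : conjS 1 H ≤ clS H T :=
    le_iSup₂ (f := fun t (_ : t ∈ (T : Set G)) => conjS t H) 1 T.one_mem
  rwa [conjS_one'] at h1

lemma clS_le {H T : Subgroup G} (hHT : H ≤ T) : clS H T ≤ T :=
  iSup₂_le fun t ht => conjS_le_of_le' hHT ht

/-- THE KEY LEMMA (Foguel): if H is conjugate-permutable in S and its normal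
closure in S is S, then H = S. -/
lemma key_lemma [Finite G] (H S : Subgroup G) (hHS : H ≤ S)
    (hCP : ∀ x ∈ S, (H : Set G) * (conjS x H : Subgroup G) = ((conjS x H : Subgroup G) : Set G) * H)
    (hcl : clS H S = S) : H = S := by
  by_contra hne
  set T : Set (Subgroup G) :=
    {X | (∃ l : List G, l ≠ [] ∧ (∀ t ∈ l, t ∈ S) ∧ (X : Set G) = cprod H l) ∧ H ≤ X ∧ X ≠ S}
    with hT
  have hHT : H ∈ T := by
    refine ⟨⟨[1], by simp, by simp [S.one_mem], ?_⟩, le_refl H, hne⟩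
    rw [cprod_cons, cprod_nil, mul_one, conjS_one']
  obtain ⟨X, hXT, hmax⟩ : ∃ X ∈ T, ∀ Y ∈ T, X ≤ Y → X = Y := by
    obtain ⟨X, hX⟩ := (Set.toFinite T).exists_maximal ⟨H, hHT⟩
    exact ⟨X, hX.1, fun Y hY hXY => le_antisymm hXY (hX.2 hY hXY)⟩
  obtain ⟨⟨l, hlne, hlS, hlX⟩, hHX, hXS⟩ := hXT
  have hXleS : X ≤ S := by
    intro g hg
    have : g ∈ cprod H l := hlX ▸ hg
    exact cprod_subset hHS l hlS this
  -- stability of X under conjugation by elements of S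
  have hstab : ∀ k ∈ S, conjS k X ≤ X := by
    intro k hk
    set l₂ := l.map (· * k) with hl₂
    have hl₂ne : l₂ ≠ [] := by
      simp [hl₂]; exact hlne
    have hl₂S : ∀ t ∈ l₂, t ∈ S := by
      intro t ht
      rw [hl₂, List.mem_map] at ht
      obtain ⟨u, hu, rfl⟩ := ht
      exact mul_mem (hlS u hu) hk
    have hconjX : ((conjS k X : Subgroup G) : Set G) = cprod H l₂ := by
      rw [conjS_coe', hlX, cprod_conj]
    have hl₁₂ne : l ++ l₂ ≠ [] := by
      simp [hlne]
    have hl₁₂S : ∀ t ∈ l ++ l₂, t ∈ S := by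
      intro t ht
      rcases List.mem_append.1 ht with h | h
      · exact hlS t h
      · exact hl₂S t h
    obtain ⟨Y, hY⟩ := cprod_subgroup hCP (l ++ l₂) hl₁₂ne hl₁₂S
    have hYcoe : (Y : Set G) = (X : Set G) * ((conjS k X : Subgroup G) : Set G) := by
      rw [hY, cprod_append, ← hlX, ← hconjX]
    have hXY : X ≤ Y := by
      intro a ha
      have : a ∈ (Y : Set G) := by
        rw [hYcoe]
        exact ⟨a, ha, 1, (conjS k X).one_mem, mul_one a⟩
      exact this
    have hconjY : conjS k X ≤ Y := by
      intro c hc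
      have : c ∈ (Y : Set G) := by
        rw [hYcoe]
        exact ⟨1, X.one_mem, c, hc, one_mul c⟩
      exact this
    by_cases hYS : Y = S
    · -- impossible: k would be in X, making Y = X = S
      exfalso
      have hkY : k ∈ Y := hYS ▸ hk
      have hkY' : k ∈ (Y : Set G) := hkY
      rw [hYcoe] at hkY'
      obtain ⟨a, haX, c, hc, hac⟩ := hkY'
      obtain ⟨b, hbX, hbc⟩ := mem_conjS'.1 hc
      have hkX : k ∈ X := by
        have heq : a * (k⁻¹ * b * k) = k := by rw [hbc]; exact hac
        have hk_eq : k = b * a := by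
          have h1 : a * k⁻¹ * b = 1 := by
            have := congrArg (fun z => z * k⁻¹) heq
            simpa [mul_assoc] using this
          have h2 : k⁻¹ = a⁻¹ * b⁻¹ := by
            have := congrArg (fun z => a⁻¹ * z * b⁻¹) h1
            simpa [mul_assoc] using this
          calc k = (k⁻¹)⁻¹ := by rw [inv_inv]
          _ = (a⁻¹ * b⁻¹)⁻¹ := by rw [h2]
          _ = b * a := by rw [mul_inv_rev, inv_inv, inv_inv]
        rw [hk_eq]; exact mul_mem hbX haX
      have hconjXX : conjS k X = X := conjS_self_of_mem' hkX
      have hYX : (Y : Set G) = (X : Set G) := by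
        rw [hYcoe, hconjXX, subgroup_mul_self]
      have : Y = X := SetLike.coe_injective hYX
      exact hXS (this ▸ hYS)
    · have hYT : Y ∈ T := by
        refine ⟨⟨l ++ l₂, hl₁₂ne, hl₁₂S, hY⟩, le_trans hHX hXY, hYS⟩
      have hXeqY : X = Y := hmax Y hYT hXY
      exact hconjY.trans hXeqY.ge
  -- conclude: S = clS H S ≤ X
  have hSleX : S ≤ X := by
    rw [← hcl]
    refine iSup₂_le fun t ht => ?_
    exact le_trans (conjS_mono' t hHX) (hstab t ht)
  exact hXS (le_antisymm hXleS hSleX)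

end Key

section Chain
variable {G : Type*} [Group G]

lemma clS_conj_stable {H T : Subgroup G} {y : G} (hy : y ∈ T) :
    (clS H T).map (MulAut.conj y).toMonoidHom = clS H T := by
  have hmap : (clS H T).map (MulAut.conj y).toMonoidHom
      = ⨆ t ∈ (T : Set G), conjS (t * y⁻¹) H := by
    rw [clS, Subgroup.map_iSup]
    refine iSup_congr fun t => ?_
    rw [Subgroup.map_iSup]
    refine iSup_congr fun ht => ?_
    have : (conjS t H).map (MulAut.conj y).toMonoidHom = conjS y⁻¹ (conjS t H) := by
      show _ = (conjS t H).map (MulAut.conj y⁻¹⁻¹).toMonoidHom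
      rw [inv_inv]
    rw [this, conjS_conjS']
  rw [hmap]
  apply le_antisymm
  · refine iSup₂_le fun t ht => ?_
    exact le_iSup₂ (f := fun t (_ : t ∈ (T : Set G)) => conjS t H) (t * y⁻¹)
      (mul_mem ht (inv_mem hy))
  · refine iSup₂_le fun t ht => ?_
    have h1 : conjS ((t * y) * y⁻¹) H ≤ ⨆ t ∈ (T : Set G), conjS (t * y⁻¹) H :=
      le_iSup₂ (f := fun t (_ : t ∈ (T : Set G)) => conjS (t * y⁻¹) H) (t * y) (mul_mem ht hy)
    rwa [mul_inv_cancel_right] at h1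

lemma clS_isNormalIn {H T : Subgroup G} (hHT : H ≤ T) : IsNormalIn (clS H T) T := by
  refine ⟨clS_le hHT, ?_⟩
  intro x hx h hh
  have hst := clS_conj_stable (H := H) hx
  rw [← hst]
  refine Subgroup.mem_map.2 ⟨h, hh, ?_⟩
  simp [MulAut.conj_apply]

lemma subnormalIn_of_cp [Finite G] (H K : Subgroup G) (hHK : H ≤ K)
    (hCP : ∀ x ∈ K, (H : Set G) * (conjS x H : Subgroup G) = ((conjS x H : Subgroup G) : Set G) * H) :
    IsSubnormalIn H K := by
  set T : ℕ → Subgroup G := fun n => (fun X => clS H X)^[n] K with hTdef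
  have hT0 : T 0 = K := rfl
  have hTsucc : ∀ n, T (n + 1) = clS H (T n) := by
    intro n
    rw [hTdef]
    exact Function.iterate_succ_apply' (fun X => clS H X) n K
  have hHTn : ∀ n, H ≤ T n := by
    intro n
    induction n with
    | zero => exact hHK
    | succ n _ => rw [hTsucc]; exact le_clS H (T n)
  have hTle : ∀ n, T (n + 1) ≤ T n := by
    intro n; rw [hTsucc]; exact clS_le (hHTn n)
  have hTK : ∀ n, T n ≤ K := by
    intro n
    induction n with
    | zero => exact le_refl K
    | succ n ih => exact (hTle n).trans ih
  have hnorm : ∀ n, IsNormalIn (T (n + 1)) (T n) := by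
    intro n; rw [hTsucc]; exact clS_isNormalIn (hHTn n)
  have hstab : ∃ m, T (m + 1) = T m := by
    by_contra hc
    push_neg at hc
    have hlt : ∀ n, T (n + 1) < T n := fun n => lt_of_le_of_ne (hTle n) (hc n)
    obtain ⟨X, ⟨m, rfl⟩, hmin⟩ :=
      (IsWellFounded.wf (r := ((· < ·) : Subgroup G → Subgroup G → Prop))).has_min
        (Set.range T) ⟨T 0, 0, rfl⟩
    exact hmin (T (m + 1)) ⟨_, rfl⟩ (hlt m)
  obtain ⟨m, hm⟩ := hstab
  have hTmH : T m = H := by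
    refine (key_lemma H (T m) (hHTn m) (fun x hx => hCP x (hTK m hx)) ?_).symm
    rw [← hTsucc]; exact hm
  refine ⟨m, fun i => T (m - (i : ℕ)), ?_, ?_, ?_⟩
  · show T (m - 0) = H
    rw [Nat.sub_zero, hTmH]
  · show T (m - (Fin.last m : ℕ)) = K
    rw [Fin.val_last, Nat.sub_self, hT0]
  · intro i
    have hi : (i : ℕ) < m := i.isLt
    have harith : m - (i : ℕ) = (m - ((i : ℕ) + 1)) + 1 := by omega
    have hc1 : ((i.castSucc : Fin (m + 1)) : ℕ) = (i : ℕ) := rfl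
    have hc2 : ((i.succ : Fin (m + 1)) : ℕ) = (i : ℕ) + 1 := rfl
    constructor
    · show T (m - (i.castSucc : Fin (m+1))) ≤ T (m - (i.succ : Fin (m+1)))
      rw [hc1, hc2, harith]
      exact hTle _
    · intro x hx h hh
      have hx' : x ∈ T (m - ((i : ℕ) + 1)) := by
        simp only [Fin.val_succ] at hx
        exact hx
      have hh' : h ∈ T ((m - ((i : ℕ) + 1)) + 1) := by
        simp only [Fin.coe_castSucc] at hh
        rwa [harith] at hh
      have hres := (hnorm (m - ((i : ℕ) + 1))).2 x hx' h hh'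
      simp only [Fin.coe_castSucc]
      rwa [harith]

end Chain

section Pro
variable {G : Type*} [Group G]

lemma normalIn_of_pronormal_aux :
    ∀ (n : ℕ) (H K : Subgroup G) (s : Fin (n + 1) → Subgroup G),
      s 0 = H → s (Fin.last n) = K →
      (∀ i : Fin n, s i.castSucc ≤ s i.succ ∧
        ∀ x ∈ s i.succ, ∀ h ∈ s i.castSucc, x * h * x⁻¹ ∈ s i.castSucc) →
      IsPronormalIn H K → IsNormalIn H K := by
  intro n
  induction n with
  | zero =>
    intro H K s h0 hl _ _
    have hHK : H = K := by rw [← h0, ← hl]; rfl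
    subst hHK
    exact ⟨le_refl H, fun x hx h hh => mul_mem (mul_mem hx hh) (inv_mem hx)⟩
  | succ n ih =>
    intro H K s h0 hl hstep hpro
    set L := s (Fin.last n).castSucc with hLdef
    have hlast := hstep (Fin.last n)
    have hsucc_last : s (Fin.last n).succ = K := by
      rw [Fin.succ_last]
      exact hl
    have hLK : L ≤ K := by rw [← hsucc_last]; exact hlast.1
    have hLnorm : ∀ x ∈ K, ∀ g ∈ L, x * g * x⁻¹ ∈ L := by
      intro x hx g hg
      exact hlast.2 x (by rwa [hsucc_last]) g hg
    have hHL : IsNormalIn H L := by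
      refine ih H L (fun i => s i.castSucc) ?_ ?_ ?_ ?_
      · rw [← h0]; rfl
      · rfl
      · intro i
        have h1 := hstep i.castSucc
        have hcs : (i.castSucc : Fin (n+1)).succ = (i.succ : Fin (n+1)).castSucc :=
          Fin.succ_castSucc i
        constructor
        · show s i.castSucc.castSucc ≤ s i.succ.castSucc
          rw [← hcs]
          exact h1.1
        · intro x hx h hh
          have hx' : x ∈ s i.castSucc.succ := by
            rw [hcs]
            exact hx
          exact h1.2 x hx' h hh
      · -- pronormality restricts to L
        refine ⟨?_, ?_⟩
        · -- H ≤ L : H = s 0 ≤ s i by chain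
          have hchain : ∀ (j : ℕ) (hj : j < n + 2), s 0 ≤ s ⟨j, hj⟩ := by
            intro j
            induction j with
            | zero => intro hj; exact le_refl _
            | succ j ihj =>
              intro hj
              have hj' : j < n + 2 := by omega
              have hjn : j < n + 1 := by omega
              have hstepj := (hstep ⟨j, hjn⟩).1
              have hcs : (⟨j, hjn⟩ : Fin (n+1)).castSucc = ⟨j, hj'⟩ := rfl
              have hsc : (⟨j, hjn⟩ : Fin (n+1)).succ = ⟨j + 1, hj⟩ := rfl
              rw [hcs, hsc] at hstepj
              exact (ihj hj').trans hstepj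
          have : s 0 ≤ L := by
            have h2 := hchain n (by omega)
            have : (Fin.last n).castSucc = (⟨n, by omega⟩ : Fin (n+2)) := rfl
            rw [hLdef, this]
            exact h2
          rwa [h0] at this
        · intro x hx
          exact hpro.2 x (hLK hx)
    have hHK : H ≤ K := hHL.1.trans hLK
    refine ⟨hHK, ?_⟩
    intro x hx h hh
    obtain ⟨k, hk, hconj⟩ := hpro.2 x hx
    have hkL : k ∈ L := by
      have hsub : H ⊔ conjS x H ≤ L := by
        refine sup_le hHL.1 ?_
        intro g hg
        obtain ⟨h', hh', rfl⟩ := mem_conjS'.1 hg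
        have := hLnorm x⁻¹ (inv_mem hx) h' (hHL.1 hh')
        rwa [inv_inv] at this
      exact hsub hk
    have hkH : conjS k H = H := by
      ext g
      rw [mem_conjS']
      constructor
      · rintro ⟨h', hh', rfl⟩
        have := hHL.2 k⁻¹ (inv_mem hkL) h' hh'
        rwa [inv_inv] at this
      · intro hg
        refine ⟨k * g * k⁻¹, hHL.2 k hkL g hg, by group⟩
    rw [hkH] at hconj
    have hh2 : h ∈ conjS x H := by rw [← hconj]; exact hh
    obtain ⟨h', hh', heq⟩ := mem_conjS'.1 hh2
    have : x * h * x⁻¹ = h' := by rw [← heq]; group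
    rw [this]
    exact hh'

end Pro

theorem subnormal_and_normal_of_pronormal_of_rcp
    {G : Type*} [Group G] [Finite G] (R H : Subgroup G)
    (h1 : IsRCP (R : Set G) H)
    (h2 : (R : Set G) * (H : Set G) = (H : Set G) * (R : Set G)) :
    IsSubnormalIn H (H ⊔ R) ∧
      (IsPronormalIn H (H ⊔ R) → IsNormalIn H (H ⊔ R)) := by
  have h1' : ∀ x ∈ (R : Set G),
      (H : Set G) * (conjS x H : Subgroup G) = ((conjS x H : Subgroup G) : Set G) * (H : Set G) :=
    h1
  have hcomm : (H : Set G) * (R : Set G) = (R : Set G) * (H : Set G) := h2.symm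
  have hsup : H ⊔ R = mulSub H R hcomm := by
    apply le_antisymm
    · refine sup_le ?_ ?_
      · intro h hh
        exact ⟨h, hh, 1, R.one_mem, mul_one h⟩
      · intro r hr
        exact ⟨1, H.one_mem, r, hr, one_mul r⟩
    · intro x hx
      obtain ⟨a, ha, b, hb, rfl⟩ := hx
      exact mul_mem (Subgroup.mem_sup_left ha) (Subgroup.mem_sup_right hb)
  have hCP : ∀ x ∈ (H ⊔ R : Subgroup G),
      (H : Set G) * (conjS x H : Subgroup G) = ((conjS x H : Subgroup G) : Set G) * H := by
    intro x hx
    rw [hsup] at hx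
    obtain ⟨a, ha, b, hb, rfl⟩ := hx
    have hab : conjS (a * b) H = conjS b H := by
      rw [← conjS_conjS' b a H, conjS_self_of_mem' ha]
    rw [hab]
    exact h1' b hb
  have hsn := subnormalIn_of_cp H (H ⊔ R) le_sup_left hCP
  refine ⟨hsn, ?_⟩
  intro hpro
  obtain ⟨n, s, h0, hl, hstep⟩ := hsn
  exact normalIn_of_pronormal_aux n H (H ⊔ R) s h0 hl hstep hpro
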